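/- Let X = {1,2,3} and consider the full transformation monoid on X. The four transformations α₁ (constant map to 1), α₂ (constant map to 2), β₁ (1↦1, 2↦2, 3↦1), β₂ (1↦1, 2↦2, 3↦2) form a subsemigroup S of idempotents, S is non-commutative, and the commuting graph of S is the 4-cycle α₁ — β₁ — α₂ — β₂ — α₁; in particular the girth of the commuting graph of S is 4. -/

import Mathlib

/-- The commuting graph of a (non-commutative) semigroup: vertices are the
non-central elements, two distinct vertices are adjacent iff they commute. -/
def commGraph (S : Type*) [Mul S] : SimpleGraph {x : S // x ∉ Set.center S} where
  Adj a b := a ≠ b ∧ (a : S) * b = (b : S) * a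
  symm := ⟨fun a b h => ⟨h.1.symm, h.2.symm⟩⟩
  loopless := ⟨fun a h => h.1 rfl⟩

/-- `α₁`: the constant map to `1` (written `0` in `Fin 3`). -/
def α₁ : Function.End (Fin 3) := fun _ => 0
/-- `α₂`: the constant map to `2` (written `1` in `Fin 3`). -/
def α₂ : Function.End (Fin 3) := fun _ => 1
/-- `β₁`: `1 ↦ 1, 2 ↦ 2, 3 ↦ 1`. -/
def β₁ : Function.End (Fin 3) := ![0, 1, 0]
/-- `β₂`: `1 ↦ 1, 2 ↦ 2, 3 ↦ 2`. -/
def β₂ : Function.End (Fin 3) := ![0, 1, 1]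

/-- The set `{α₁, α₂, β₁, β₂}` of transformations of `{1,2,3}`. -/
def T6 : Set (Function.End (Fin 3)) := {α₁, α₂, β₁, β₂}

/-- The subsemigroup of the full transformation monoid generated by `{α₁, α₂, β₁, β₂}`. -/
def S6 : Subsemigroup (Function.End (Fin 3)) := Subsemigroup.closure T6

instance : DecidableEq (Function.End (Fin 3)) :=
  inferInstanceAs (DecidableEq (Fin 3 → Fin 3))

lemma memT6_iff {f : Function.End (Fin 3)} :
    f ∈ T6 ↔ f = α₁ ∨ f = α₂ ∨ f = β₁ ∨ f = β₂ := by
  simp [T6, Set.mem_insert_iff, Set.mem_singleton_iff]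

lemma T6_mul_closed : ∀ a ∈ T6, ∀ b ∈ T6, a * b ∈ T6 := by
  intro a ha b hb
  rw [memT6_iff] at *
  rcases ha with rfl|rfl|rfl|rfl <;> rcases hb with rfl|rfl|rfl|rfl <;> decide

def S6' : Subsemigroup (Function.End (Fin 3)) where
  carrier := T6
  mul_mem' := fun ha hb => T6_mul_closed _ ha _ hb

lemma S6_eq : S6 = S6' := by
  apply le_antisymm
  · exact Subsemigroup.closure_le.2 (fun x hx => hx)
  · exact Subsemigroup.subset_closure

lemma coeS6 : (S6 : Set (Function.End (Fin 3))) = T6 := by rw [S6_eq]; rfl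

lemma mem_S6_of_T6 {f : Function.End (Fin 3)} (h : f ∈ T6) : f ∈ S6 :=
  Subsemigroup.subset_closure h

lemma memT6_of_S6 {f : Function.End (Fin 3)} (h : f ∈ S6) : f ∈ T6 := by
  rwa [← SetLike.mem_coe, coeS6] at h

lemma four_le_of_cycle {V : Type*} {G : SimpleGraph V}
    (h : ∀ a b c : V, G.Adj a b → G.Adj b c → ¬ G.Adj c a) {a : V}
    (w : G.Walk a a) (hw : w.IsCycle) : 4 ≤ w.length := by
  by_contra hlt
  push_neg at hlt
  have h3 := hw.three_le_length
  have hlen : w.length = 3 := by omega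
  cases w with
  | nil => simp at hlen
  | cons h₁ p =>
    cases p with
    | nil => simp at hlen
    | cons h₂ q =>
      cases q with
      | nil => simp at hlen
      | cons h₃ r =>
        cases r with
        | nil => exact h _ _ _ h₁ h₂ h₃
        | cons h₄ s => simp [SimpleGraph.Walk.length_cons] at hlen

lemma hmα₁ : α₁ ∈ S6 := mem_S6_of_T6 (memT6_iff.mpr (by tauto))
lemma hmα₂ : α₂ ∈ S6 := mem_S6_of_T6 (memT6_iff.mpr (by tauto))
lemma hmβ₁ : β₁ ∈ S6 := mem_S6_of_T6 (memT6_iff.mpr (by tauto))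
lemma hmβ₂ : β₂ ∈ S6 := mem_S6_of_T6 (memT6_iff.mpr (by tauto))

lemma noncentral : ∀ x : S6, x ∉ Set.center S6 := by
  intro x hx
  rw [Semigroup.mem_center_iff] at hx
  have hm := memT6_of_S6 x.2
  rw [memT6_iff] at hm
  rcases hm with h|h|h|h
  · have e : α₂ * (x : Function.End (Fin 3)) = x * α₂ := congrArg Subtype.val (hx ⟨α₂, hmα₂⟩)
    rw [h] at e; revert e; decide
  · have e : α₁ * (x : Function.End (Fin 3)) = x * α₁ := congrArg Subtype.val (hx ⟨α₁, hmα₁⟩)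
    rw [h] at e; revert e; decide
  · have e : β₂ * (x : Function.End (Fin 3)) = x * β₂ := congrArg Subtype.val (hx ⟨β₂, hmβ₂⟩)
    rw [h] at e; revert e; decide
  · have e : β₁ * (x : Function.End (Fin 3)) = x * β₁ := congrArg Subtype.val (hx ⟨β₁, hmβ₁⟩)
    rw [h] at e; revert e; decide

abbrev V6 := {x : S6 // x ∉ Set.center S6}

lemma adj_of (a b : V6) (h1 : a.1.1 ≠ b.1.1) (h2 : a.1.1 * b.1.1 = b.1.1 * a.1.1) :
    (commGraph S6).Adj a b :=
  ⟨fun e => h1 (congrArg (fun z : V6 => z.1.1) e), Subtype.ext h2⟩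

lemma trifree : ∀ a b c : V6, (commGraph S6).Adj a b → (commGraph S6).Adj b c →
    ¬ (commGraph S6).Adj c a := by
  intro a b c hab hbc hca
  have ha := memT6_of_S6 a.1.2; rw [memT6_iff] at ha
  have hb := memT6_of_S6 b.1.2; rw [memT6_iff] at hb
  have hc := memT6_of_S6 c.1.2; rw [memT6_iff] at hc
  have e1 : a.1.1 * b.1.1 = b.1.1 * a.1.1 := congrArg Subtype.val hab.2
  have e2 : b.1.1 * c.1.1 = c.1.1 * b.1.1 := congrArg Subtype.val hbc.2
  have e3 : c.1.1 * a.1.1 = a.1.1 * c.1.1 := congrArg Subtype.val hca.2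
  have n1 : a.1.1 ≠ b.1.1 := fun h => hab.1 (Subtype.ext (Subtype.ext h))
  have n2 : b.1.1 ≠ c.1.1 := fun h => hbc.1 (Subtype.ext (Subtype.ext h))
  have n3 : c.1.1 ≠ a.1.1 := fun h => hca.1 (Subtype.ext (Subtype.ext h))
  rcases ha with ha|ha|ha|ha <;> rcases hb with hb|hb|hb|hb <;> rcases hc with hc|hc|hc|hc <;>
    simp only [ha, hb, hc] at e1 e2 e3 n1 n2 n3 <;> revert e1 e2 e3 n1 n2 n3 <;> decide

def v₁ : V6 := ⟨⟨α₁, hmα₁⟩, noncentral _⟩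
def v₂ : V6 := ⟨⟨β₁, hmβ₁⟩, noncentral _⟩
def v₃ : V6 := ⟨⟨α₂, hmα₂⟩, noncentral _⟩
def v₄ : V6 := ⟨⟨β₂, hmβ₂⟩, noncentral _⟩

def w6 : (commGraph S6).Walk v₁ v₁ :=
  .cons (adj_of v₁ v₂ (by decide) (by decide))
    (.cons (adj_of v₂ v₃ (by decide) (by decide))
      (.cons (adj_of v₃ v₄ (by decide) (by decide))
        (.cons (adj_of v₄ v₁ (by decide) (by decide)) .nil)))

lemma vne' {a b : V6} (h : a.1.1 ≠ b.1.1) : a ≠ b := fun e => h (congrArg (fun z : V6 => z.1.1) e)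

lemma w6_cycle : w6.IsCycle := by
  have n12 : v₁ ≠ v₂ := vne' (by decide)
  have n13 : v₁ ≠ v₃ := vne' (by decide)
  have n14 : v₁ ≠ v₄ := vne' (by decide)
  have n23 : v₂ ≠ v₃ := vne' (by decide)
  have n24 : v₂ ≠ v₄ := vne' (by decide)
  have n34 : v₃ ≠ v₄ := vne' (by decide)
  simp [w6, SimpleGraph.Walk.isCycle_def, SimpleGraph.Walk.isTrail_def,
    n12, n13, n14, n23, n24, n34, n12.symm, n13.symm, n14.symm, n23.symm, n24.symm, n34.symm]

lemma egirth_eq : (commGraph S6).egirth = 4 := by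
  apply le_antisymm
  · have h := iInf_le_of_le v₁ (iInf_le_of_le w6 (iInf_le _ w6_cycle))
      (f := fun a => ⨅ w : (commGraph S6).Walk a a, ⨅ _ : w.IsCycle, (w.length : ℕ∞))
    exact h.trans_eq (by rfl)
  · rw [SimpleGraph.le_egirth]
    intro a w hw
    exact_mod_cast four_le_of_cycle trifree w hw

lemma girth_eq : (commGraph S6).girth = 4 := by
  rw [SimpleGraph.girth, egirth_eq]; rfl

theorem commGraph_of_S6_is_four_cycle :
    -- `{α₁, α₂, β₁, β₂}` is a subsemigroup (of idempotents) of the full transformation monoid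
    ((S6 : Set (Function.End (Fin 3))) = T6) ∧
    (∀ f ∈ T6, f * f = f) ∧
    -- it is non-commutative
    (α₁ * α₂ ≠ α₂ * α₁) ∧
    -- every element of `S6` is non-central in `S6`, so all four elements are vertices
    (∀ x : S6, x ∉ Set.center S6) ∧
    -- the commuting graph is exactly the 4-cycle α₁ — β₁ — α₂ — β₂ — α₁
    (∀ x ∈ T6, ∀ y ∈ T6, (x ≠ y ∧ x * y = y * x) ↔
      ((x, y) ∈ ({(α₁, β₁), (β₁, α₁), (β₁, α₂), (α₂, β₁), (α₂, β₂), (β₂, α₂),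
        (β₂, α₁), (α₁, β₂)} : Set (Function.End (Fin 3) × Function.End (Fin 3))))) ∧
    -- in particular its girth is 4
    (commGraph S6).girth = 4 := by
  refine ⟨coeS6, ?_, by decide, noncentral, ?_, girth_eq⟩
  · intro f hf
    rw [memT6_iff] at hf
    rcases hf with rfl|rfl|rfl|rfl <;> decide
  · intro x hx y hy
    rw [memT6_iff] at hx hy
    simp only [Set.mem_insert_iff, Set.mem_singleton_iff, Prod.mk.injEq]
    rcases hx with rfl|rfl|rfl|rfl <;> rcases hy with rfl|rfl|rfl|rfl <;> decide
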